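/- arXiv:0909.1359 — 3 statements merged into one kernel-verified Lean document; each statement's English description precedes it below -/
import Mathlib

section
/- For p > 3 prime, the exact sequence of F_p[SL_2(F_p)]-modules 0 → V_1 → V_p → V_{p-2} → 0, where the first map is the Serre operator D(f) = X^p ∂f/∂X + Y^p ∂f/∂Y, does not split; i.e., V_p is a non-split extension of V_{p-2} by V_1. -/
open MvPolynomial

/-- The Serre operator `D f = X^q ∂f/∂X + Y^q ∂f/∂Y` as a linear map. -/
noncomputable def serreDLin (F : Type*) [CommRing F] (q : ℕ) :
    MvPolynomial (Fin 2) F →ₗ[F] MvPolynomial (Fin 2) F :=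
  (LinearMap.mulLeft F (X 0 ^ q)) ∘ₗ (pderiv 0).toLinearMap +
    (LinearMap.mulLeft F (X 1 ^ q)) ∘ₗ (pderiv 1).toLinearMap

/-- The action of a matrix `g = [[a,b],[c,d]]` on `F[X, Y]`, determined by
`g · X = aX + cY`, `g · Y = bX + dY`. -/
noncomputable def matAct {F : Type*} [CommRing F] (g : Matrix (Fin 2) (Fin 2) F) :
    MvPolynomial (Fin 2) F →ₐ[F] MvPolynomial (Fin 2) F :=
  aeval (fun i => ∑ j, C (g j i) * X j)

lemma serreDLin_apply {F : Type*} [CommRing F] (q : ℕ) (f : MvPolynomial (Fin 2) F) :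
    serreDLin F q f = X 0 ^ q * pderiv 0 f + X 1 ^ q * pderiv 1 f := rfl

lemma matAct_X {F : Type*} [CommRing F] (g : Matrix (Fin 2) (Fin 2) F) (i : Fin 2) :
    matAct g (X i) = C (g 0 i) * X 0 + C (g 1 i) * X 1 := by
  simp [matAct, Fin.sum_univ_two]

lemma deg_one_classify {v : Fin 2 →₀ ℕ} (h : v.degree = 1) :
    v = Finsupp.single 0 1 ∨ v = Finsupp.single 1 1 := by
  have hsum : v 0 + v 1 = 1 := by
    have : v.degree = v 0 + v 1 := by
      rw [Finsupp.degree_apply, Finset.sum_subset (Finset.subset_univ v.support)]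
      · exact Fin.sum_univ_two v
      · intro x _ hx
        simpa using Finsupp.notMem_support_iff.mp hx
    omega
  rcases Nat.add_eq_one_iff.mp hsum with ⟨h0, h1⟩ | ⟨h0, h1⟩
  · right
    ext i
    fin_cases i <;> simp [h0, h1, Finsupp.single_apply]
  · left
    ext i
    fin_cases i <;> simp [h0, h1, Finsupp.single_apply]

lemma serreDLin_mono {F : Type*} [CommRing F] (q : ℕ) (j : Fin 2) (c : F) :
    serreDLin F q (monomial (Finsupp.single j 1) c) = c • (X j ^ q) := by
  fin_cases j <;>
    simp [serreDLin_apply, pderiv_monomial, Finsupp.single_apply, smul_eq_C_mul, mul_comm,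
      ← C_apply, Finsupp.single_eq_single_iff]

lemma image_le_span {F : Type*} [CommRing F] (q : ℕ) :
    Submodule.map (serreDLin F q) (homogeneousSubmodule (Fin 2) F 1) ≤
      Submodule.span F {X 0 ^ q, X 1 ^ q} := by
  rintro _ ⟨f, hf, rfl⟩
  rw [SetLike.mem_coe, mem_homogeneousSubmodule] at hf
  rw [f.as_sum, map_sum]
  apply Submodule.sum_mem
  intro v hv
  have hdeg : v.degree = 1 := by
    rw [Finsupp.degree_eq_weight_one]
    exact hf (mem_support_iff.mp hv)
  rcases deg_one_classify hdeg with h | h <;> rw [h, serreDLin_mono] <;>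
    exact Submodule.smul_mem _ _ (Submodule.subset_span (by simp))

lemma span_mem_image {F : Type*} [CommRing F] (q : ℕ) (a b : F) :
    a • ((X 0 : MvPolynomial (Fin 2) F) ^ q) + b • ((X 1 : MvPolynomial (Fin 2) F) ^ q) ∈
      Submodule.map (serreDLin F q) (homogeneousSubmodule (Fin 2) F 1) := by
  refine ⟨a • X 0 + b • X 1, ?_, ?_⟩
  · exact Submodule.add_mem _
      (Submodule.smul_mem _ _ (by rw [mem_homogeneousSubmodule]; exact isHomogeneous_X F 0))
      (Submodule.smul_mem _ _ (by rw [mem_homogeneousSubmodule]; exact isHomogeneous_X F 1))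
  · have h0 : serreDLin F q (X 0) = X 0 ^ q := by
      simp [serreDLin_apply, pderiv_X]
    have h1 : serreDLin F q (X 1) = X 1 ^ q := by
      simp [serreDLin_apply, pderiv_X]
    rw [map_add, map_smul, map_smul, h0, h1]

lemma Xpow_indep {F : Type*} [CommRing F] [Nontrivial F] {q : ℕ} (hq : q ≠ 0) {a b : F}
    (h : a • ((X 0 : MvPolynomial (Fin 2) F) ^ q) + b • ((X 1 : MvPolynomial (Fin 2) F) ^ q) = 0) :
    a = 0 ∧ b = 0 := by
  constructor
  · have := congrArg (coeff (Finsupp.single 0 q)) h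
    simpa [coeff_X_pow, Finsupp.single_eq_single_iff, hq] using this
  · have := congrArg (coeff (Finsupp.single 1 q)) h
    simpa [coeff_X_pow, Finsupp.single_eq_single_iff, hq] using this

/-- For `p > 3`, the exact sequence `0 → V_1 → V_p → V_{p-2} → 0` of
`F_p[SL₂(F_p)]`-modules, with first map the Serre operator `D`, does not split:
the image `D(V_1)` has no `SL₂(F_p)`-stable complement inside `V_p`. -/
theorem Vp_extension_nonsplit (p : ℕ) [Fact p.Prime] (hp : 3 < p) :
    ¬ ∃ M : Submodule (ZMod p) (MvPolynomial (Fin 2) (ZMod p)),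
      M ≤ homogeneousSubmodule (Fin 2) (ZMod p) p ∧
      (∀ g : Matrix.SpecialLinearGroup (Fin 2) (ZMod p), ∀ f ∈ M,
        matAct (↑g : Matrix (Fin 2) (Fin 2) (ZMod p)) f ∈ M) ∧
      M ⊓ Submodule.map (serreDLin (ZMod p) p)
          (homogeneousSubmodule (Fin 2) (ZMod p) 1) = ⊥ ∧
      M ⊔ Submodule.map (serreDLin (ZMod p) p)
          (homogeneousSubmodule (Fin 2) (ZMod p) 1) =
        homogeneousSubmodule (Fin 2) (ZMod p) p := by
  rintro ⟨M, hle, hstab, hinf, hsup⟩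
  set F := ZMod p
  set Rp := MvPolynomial (Fin 2) F
  set W := Submodule.map (serreDLin F p) (homogeneousSubmodule (Fin 2) F 1) with hW
  set P0 : Rp := X 0 ^ p with hP0
  set P1 : Rp := X 1 ^ p with hP1
  have hp5 : 5 ≤ p := by
    by_contra h
    have h4 : p = 4 := by omega
    exact absurd (h4 ▸ (Fact.out : p.Prime)) (by norm_num)
  have hpne : p ≠ 0 := by omega
  obtain ⟨mid, hmid⟩ : Odd p := (Fact.out : p.Prime).odd_of_ne_two (by omega)
  have hmid2 : 2 ≤ mid := by omega
  -- uniqueness of decompositions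
  have uniq2 : ∀ m1 ∈ M, ∀ m2 ∈ M, ∀ a1 b1 a2 b2 : F,
      m1 + a1 • P0 + b1 • P1 = m2 + a2 • P0 + b2 • P1 → a1 = a2 ∧ b1 = b2 := by
    intro m1 hm1 m2 hm2 a1 b1 a2 b2 h
    have hWmem : (a1 - a2) • P0 + (b1 - b2) • P1 ∈ W := span_mem_image p _ _
    have hMmem : (a1 - a2) • P0 + (b1 - b2) • P1 ∈ M := by
      have heq : (a1 - a2) • P0 + (b1 - b2) • P1 = m2 - m1 := by
        linear_combination (norm := module) h
      rw [heq]
      exact Submodule.sub_mem _ hm2 hm1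
    have hbot : (a1 - a2) • P0 + (b1 - b2) • P1 ∈ M ⊓ W := ⟨hMmem, hWmem⟩
    rw [hinf, Submodule.mem_bot] at hbot
    obtain ⟨ha, hb⟩ := Xpow_indep hpne hbot
    exact ⟨sub_eq_zero.mp ha, sub_eq_zero.mp hb⟩
  -- existence of decompositions
  have decomp : ∀ i : ℕ, ∃ m : Rp, ∃ a b : F, m ∈ M ∧
      (i ≤ p → X 0 ^ i * X 1 ^ (p - i) = m + a • P0 + b • P1) := by
    intro i
    by_cases hi : i ≤ p
    · have hf : (X 0 ^ i * X 1 ^ (p - i) : Rp) ∈ homogeneousSubmodule (Fin 2) F p := by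
        rw [mem_homogeneousSubmodule]
        have h := ((isHomogeneous_X F (0 : Fin 2)).pow i).mul ((isHomogeneous_X F (1 : Fin 2)).pow (p - i))
        rw [show 1 * i + 1 * (p - i) = p by omega] at h
        exact h
      rw [← hsup] at hf
      obtain ⟨m, hm, w, hw, heq⟩ := Submodule.mem_sup.mp hf
      obtain ⟨a, b, hab⟩ := Submodule.mem_span_pair.mp (image_le_span p hw)
      exact ⟨m, a, b, hm, fun _ => by rw [← heq, ← hab, add_assoc]⟩
    · exact ⟨0, 0, 0, M.zero_mem, fun h => absurd h hi⟩
  choose mm AA BB hmm hdec using decomp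
  -- generator of the unit group
  obtain ⟨u, hu⟩ := IsCyclic.exists_generator (α := (ZMod p)ˣ)
  have hord : orderOf u = p - 1 := by
    rw [orderOf_eq_card_of_forall_mem_zpowers hu, Nat.card_eq_fintype_card, ZMod.card_units p]
  set ζ : F := (u : F) with hζ
  set ζinv : F := ((u⁻¹ : (ZMod p)ˣ) : F) with hζinv
  have hζ0 : ζ ≠ 0 := Units.ne_zero u
  have hζζinv : ζ * ζinv = 1 := by
    rw [hζ, hζinv, ← Units.val_mul, mul_inv_cancel, Units.val_one]
  have hup1 : u ^ (p - 1) = 1 := by rw [← hord]; exact pow_orderOf_eq_one u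
  have upow : ∀ i : ℕ, 1 ≤ i → i ≤ p → u ^ i * (u⁻¹) ^ (p - i) = u ^ (2 * i - 1) := by
    intro i h1 h2
    rw [inv_pow, mul_inv_eq_iff_eq_mul, ← pow_add,
      show 2 * i - 1 + (p - i) = (p - 1) + i by omega, pow_add, hup1, one_mul]
  -- the torus relations
  have torus : ∀ i : ℕ, 1 ≤ i → i ≤ p →
      ((u ^ (2 * i - 1) : (ZMod p)ˣ) : F) * AA i = AA i * ζ ∧
      ((u ^ (2 * i - 1) : (ZMod p)ˣ) : F) * BB i = BB i * ζinv := by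
    intro i h1 h2
    have hdet : (!![ζ, 0; 0, ζinv] : Matrix (Fin 2) (Fin 2) F).det = 1 := by
      simp [Matrix.det_fin_two_of, hζζinv]
    set gd : Matrix.SpecialLinearGroup (Fin 2) (ZMod p) := ⟨!![ζ, 0; 0, ζinv], hdet⟩ with hgd
    have hgd0 : matAct (↑gd : Matrix (Fin 2) (Fin 2) F) (X 0) = C ζ * X 0 := by
      rw [matAct_X]
      simp [hgd]
    have hgd1 : matAct (↑gd : Matrix (Fin 2) (Fin 2) F) (X 1) = C ζinv * X 1 := by
      rw [matAct_X]
      simp [hgd]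
    set t : F := ζ ^ i * ζinv ^ (p - i) with htdef
    have ht : t = ((u ^ (2 * i - 1) : (ZMod p)ˣ) : F) := by
      rw [htdef, hζ, hζinv, ← Units.val_pow_eq_pow_val, ← Units.val_pow_eq_pow_val,
        ← Units.val_mul, upow i h1 h2]
    have e := hdec i h2
    have happ := congrArg (matAct (↑gd : Matrix (Fin 2) (Fin 2) F)) e
    rw [map_mul, map_pow, map_pow, hgd0, hgd1, map_add, map_add, map_smul, map_smul] at happ
    rw [hP0, hP1, map_pow, map_pow, hgd0, hgd1] at happ
    have hL : (C ζ * X 0 : Rp) ^ i * (C ζinv * X 1 : Rp) ^ (p - i) =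
        t • ((X 0 : Rp) ^ i * (X 1 : Rp) ^ (p - i)) := by
      rw [mul_pow, mul_pow, ← C_pow, ← C_pow, smul_eq_C_mul, htdef, map_mul]
      ring
    have hQ0 : (C ζ * X 0 : Rp) ^ p = ζ • P0 := by
      rw [mul_pow, ← C_pow, ZMod.pow_card, smul_eq_C_mul, hP0]
    have hQ1 : (C ζinv * X 1 : Rp) ^ p = ζinv • P1 := by
      rw [mul_pow, ← C_pow, ZMod.pow_card, smul_eq_C_mul, hP1]
    rw [hQ0, hQ1] at happ
    have happ2 := ((congrArg (fun z => t • z) e).symm.trans (hL.symm.trans happ))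
    -- happ : t • (mm i + AA i • P0 + BB i • P1)
    --      = matAct gd (mm i) + AA i • ζ • P0 + BB i • ζinv • P1
    have h2d : t • mm i + (t * AA i) • P0 + (t * BB i) • P1 =
        matAct (↑gd : Matrix (Fin 2) (Fin 2) F) (mm i) + (AA i * ζ) • P0 +
          (BB i * ζinv) • P1 := by
      linear_combination (norm := module) happ2
    have := uniq2 _ (Submodule.smul_mem _ t (hmm i)) _ (hstab gd _ (hmm i)) _ _ _ _ h2d
    rw [← ht]
    exact ⟨(by rw [← this.1]), (by rw [← this.2])⟩
  -- vanishing of the A-coefficients away from 1, mid+1, p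
  have Avanish : ∀ i : ℕ, 2 ≤ i → i ≤ p - 1 → i ≠ mid + 1 → AA i = 0 := by
    intro i hi1 hi2 hi3
    have h := (torus i (by omega) (by omega)).1
    have hfac : (((u ^ (2 * i - 1) : (ZMod p)ˣ) : F) - ζ) * AA i = 0 := by
      linear_combination h
    have hne : ((u ^ (2 * i - 1) : (ZMod p)ˣ) : F) - ζ ≠ 0 := by
      intro hc
      have huu : u ^ (2 * i - 1) = u ^ 1 := by
        apply Units.ext
        rw [pow_one, ← hζ]
        exact sub_eq_zero.mp hc
      rw [pow_eq_pow_iff_modEq, hord] at huu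
      have hdvd := (Nat.modEq_iff_dvd' (by omega : 1 ≤ 2 * i - 1)).mp huu.symm
      obtain ⟨k, hk⟩ := hdvd
      have hk' : k = 0 ∨ k = 1 ∨ 2 ≤ k := by omega
      rcases hk' with rfl | rfl | hk2
      · omega
      · omega
      · have := Nat.mul_le_mul_left (p - 1) hk2
        omega
    rcases mul_eq_zero.mp hfac with h' | h'
    · exact absurd h' hne
    · exact h'
  -- B-coefficient at 1 vanishes
  have hB1 : BB 1 = 0 := by
    have h := (torus 1 le_rfl (by omega)).2
    have hfac : (((u ^ (2 * 1 - 1) : (ZMod p)ˣ) : F) - ζinv) * BB 1 = 0 := by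
      linear_combination h
    have hne : ((u ^ (2 * 1 - 1) : (ZMod p)ˣ) : F) - ζinv ≠ 0 := by
      intro hc
      have huu : u ^ (2 * 1 - 1) = u⁻¹ := by
        apply Units.ext
        rw [← hζinv]
        exact sub_eq_zero.mp hc
      rw [pow_one] at huu
      have h2 : u ^ 2 = 1 := by
        rw [pow_two]
        nth_rewrite 2 [huu]
        exact mul_inv_cancel u
      have := Nat.le_of_dvd (by norm_num) (hord ▸ orderOf_dvd_of_pow_eq_one h2)
      omega
    rcases mul_eq_zero.mp hfac with h' | h'
    · exact absurd h' hne
    · exact h'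
  -- coefficients at i = p
  have hApBp : AA p = 1 ∧ BB p = 0 := by
    have e := hdec p le_rfl
    rw [Nat.sub_self, pow_zero, mul_one] at e
    have e' : (0 : Rp) + (1 : F) • P0 + (0 : F) • P1 = mm p + AA p • P0 + BB p • P1 := by
      rw [zero_add, one_smul, zero_smul, add_zero]
      exact e
    obtain ⟨h1, h2⟩ := uniq2 0 M.zero_mem (mm p) (hmm p) 1 0 (AA p) (BB p) e'
    exact ⟨h1.symm, h2.symm⟩
  -- the unipotent relation
  have huni : ∀ b : F, b ≠ 0 →
      b ^ mid * (((p - 1).choose mid : ℕ) : F) * AA (mid + 1) + 1 = 0 := by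
    intro b hb
    have hdet : (!![1, b; 0, 1] : Matrix (Fin 2) (Fin 2) F).det = 1 := by
      simp [Matrix.det_fin_two_of]
    set gu : Matrix.SpecialLinearGroup (Fin 2) (ZMod p) := ⟨!![1, b; 0, 1], hdet⟩ with hgu
    have hgu0 : matAct (↑gu : Matrix (Fin 2) (Fin 2) F) (X 0) = X 0 := by
      rw [matAct_X]
      simp [hgu]
    have hgu1 : matAct (↑gu : Matrix (Fin 2) (Fin 2) F) (X 1) = C b * X 0 + X 1 := by
      rw [matAct_X]
      simp [hgu]
    have e1 := hdec 1 (by omega)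
    rw [hB1, zero_smul, add_zero] at e1
    have happ := congrArg (matAct (↑gu : Matrix (Fin 2) (Fin 2) F)) e1
    rw [map_add, map_smul, hP0, map_pow, hgu0] at happ
    set c : ℕ → F := fun k => b ^ k * (((p - 1).choose k : ℕ) : F) with hc
    have hL : matAct (↑gu : Matrix (Fin 2) (Fin 2) F) ((X 0 : Rp) ^ 1 * (X 1 : Rp) ^ (p - 1)) =
        ∑ k ∈ Finset.range p, c k • ((X 0 : Rp) ^ (k + 1) * (X 1 : Rp) ^ (p - (k + 1))) := by
      rw [map_mul, map_pow, map_pow, hgu0, hgu1, add_pow]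
      rw [show p - 1 + 1 = p by omega]
      rw [Finset.mul_sum]
      refine Finset.sum_congr rfl fun k hk => ?_
      rw [Finset.mem_range] at hk
      rw [show p - (k + 1) = p - 1 - k by omega]
      rw [hc]
      simp only
      rw [smul_eq_C_mul, map_mul, mul_pow, ← C_pow,
        ← map_natCast (C : F →+* Rp) ((p - 1).choose k)]
      ring
    have hsplit : ∀ k ∈ Finset.range p,
        c k • ((X 0 : Rp) ^ (k + 1) * (X 1 : Rp) ^ (p - (k + 1))) =
        c k • mm (k + 1) + (c k * AA (k + 1)) • P0 + (c k * BB (k + 1)) • P1 := by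
      intro k hk
      rw [Finset.mem_range] at hk
      rw [hdec (k + 1) (by omega)]
      module
    rw [Finset.sum_congr rfl hsplit, Finset.sum_add_distrib, Finset.sum_add_distrib,
      ← Finset.sum_smul, ← Finset.sum_smul] at hL
    have hkey : matAct (↑gu : Matrix (Fin 2) (Fin 2) F) (mm 1) + AA 1 • P0 + (0 : F) • P1 =
        (∑ k ∈ Finset.range p, c k • mm (k + 1)) +
          (∑ k ∈ Finset.range p, c k * AA (k + 1)) • P0 +
          (∑ k ∈ Finset.range p, c k * BB (k + 1)) • P1 := by
      rw [zero_smul, add_zero]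
      exact happ.symm.trans hL
    obtain ⟨hA1eq, -⟩ := uniq2 _ (hstab gu _ (hmm 1)) _
      (Submodule.sum_mem _ fun k _ => Submodule.smul_mem _ _ (hmm (k + 1))) _ _ _ _ hkey
    have hsub : ({0, mid, p - 1} : Finset ℕ) ⊆ Finset.range p := by
      intro x hx
      simp only [Finset.mem_insert, Finset.mem_singleton] at hx
      rcases hx with rfl | rfl | rfl <;> rw [Finset.mem_range] <;> omega
    have hzero : ∀ x ∈ Finset.range p, x ∉ ({0, mid, p - 1} : Finset ℕ) →
        c x * AA (x + 1) = 0 := by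
      intro x hxr hxn
      rw [Finset.mem_range] at hxr
      simp only [Finset.mem_insert, Finset.mem_singleton] at hxn
      push_neg at hxn
      rw [Avanish (x + 1) (by omega) (by omega) (by omega), mul_zero]
    have hsum := Finset.sum_subset hsub hzero
    rw [← hsum] at hA1eq
    have h0ne : (0 : ℕ) ∉ ({mid, p - 1} : Finset ℕ) := by
      simp only [Finset.mem_insert, Finset.mem_singleton]
      push_neg
      omega
    have hmne : mid ∉ ({p - 1} : Finset ℕ) := by
      simp only [Finset.mem_singleton]
      omega
    rw [Finset.sum_insert h0ne, Finset.sum_insert hmne, Finset.sum_singleton] at hA1eq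
    have hc0 : c 0 = 1 := by
      rw [hc]
      simp
    have hcp : c (p - 1) * AA (p - 1 + 1) = 1 := by
      rw [hc]
      simp only
      rw [show p - 1 + 1 = p by omega, hApBp.1, Nat.choose_self,
        ZMod.pow_card_sub_one_eq_one hb]
      norm_num
    rw [hc0, one_mul, hcp] at hA1eq
    have hfin : c mid * AA (mid + 1) + 1 = 0 := by linear_combination -hA1eq
    rw [hc] at hfin
    simp only at hfin
    linear_combination hfin
  -- ζ ^ mid = -1
  have hζmid : ζ ^ mid = -1 := by
    have hsq : (ζ ^ mid) ^ 2 = 1 := by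
      rw [← pow_mul, show mid * 2 = p - 1 by omega]
      exact ZMod.pow_card_sub_one_eq_one hζ0
    have hne1 : ζ ^ mid ≠ 1 := by
      intro hcon
      have hu1 : u ^ mid = 1 := Units.ext (by
        rw [Units.val_pow_eq_pow_val, ← hζ, hcon, Units.val_one])
      have hdvd := orderOf_dvd_of_pow_eq_one hu1
      rw [hord] at hdvd
      have := Nat.le_of_dvd (by omega) hdvd
      omega
    have hfac : (ζ ^ mid - 1) * (ζ ^ mid + 1) = 0 := by linear_combination hsq
    rcases mul_eq_zero.mp hfac with h' | h'
    · exact absurd (by linear_combination h') hne1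
    · linear_combination h'
  have h1 := huni 1 one_ne_zero
  have h2 := huni ζ hζ0
  rw [one_pow] at h1
  rw [hζmid] at h2
  have h20 : (2 : F) = 0 := by linear_combination h1 + h2
  have hdvd2 : p ∣ 2 := by
    refine (ZMod.natCast_eq_zero_iff 2 p).mp ?_
    push_cast
    exact h20
  have := Nat.le_of_dvd (by norm_num) hdvd2
  omega
end

section
/- For p prime, there is an isomorphism of F_p[SL_2(F_p)]-modules V_{2p-1} ≅ V_1 ⊗ V_{p-1}, induced by restriction from the Steinberg tensor product decomposition over F_{p^2}. -/
open MvPolynomial TensorProduct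

/-! ### Auxiliary material -/

/-- The exponent finsupp `(i, n - i)` on `Fin 2`. -/
noncomputable def expo (n i : ℕ) : Fin 2 →₀ ℕ :=
  Finsupp.single 0 i + Finsupp.single 1 (n - i)

lemma degree_fin2 (d : Fin 2 →₀ ℕ) : d.degree = d 0 + d 1 := by
  rw [Finsupp.degree_eq_sum, Fin.sum_univ_two]

lemma expo_apply0 (n i : ℕ) : expo n i 0 = i := by
  simp [expo, Finsupp.single_apply]

lemma expo_apply1 (n i : ℕ) : expo n i 1 = n - i := by
  simp [expo, Finsupp.single_apply]

lemma expo_degree {n i : ℕ} (h : i ≤ n) : (expo n i).degree = n := by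
  rw [degree_fin2, expo_apply0, expo_apply1]; omega

lemma eq_expo {n : ℕ} {d : Fin 2 →₀ ℕ} (h : d.degree = n) : d = expo n (d 0) := by
  rw [degree_fin2] at h
  ext a
  fin_cases a
  · show d 0 = expo n (d 0) 0
    rw [expo_apply0]
  · show d 1 = expo n (d 0) 1
    rw [expo_apply1]; omega

lemma monomial_expo {F : Type*} [CommRing F] (n i : ℕ) :
    (monomial (expo n i) (1 : F)) = X 0 ^ i * X 1 ^ (n - i) := by
  have : (1 : F) = 1 * 1 := (one_mul 1).symm
  rw [expo, this, ← monomial_mul, X_pow_eq_monomial, X_pow_eq_monomial]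

lemma expo_injective (n : ℕ) : Function.Injective (fun i : Fin (n+1) => expo n (i : ℕ)) := by
  intro i j h
  have := congrArg (fun d : Fin 2 →₀ ℕ => d 0) h
  simp only [expo_apply0] at this
  exact Fin.ext this

lemma mem_expo {F : Type*} [CommRing F] {n i : ℕ} (h : i ≤ n) :
    (monomial (expo n i) (1 : F)) ∈ homogeneousSubmodule (Fin 2) F n :=
  isHomogeneous_monomial _ (expo_degree h)

/-- Homogeneous polynomials of degree `n` in 2 variables are spanned by `n+1` monomials. -/
lemma homogeneous_span (F : Type*) [CommRing F] (n : ℕ) :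
    homogeneousSubmodule (Fin 2) F n =
      Submodule.span F (Set.range fun i : Fin (n+1) => monomial (expo n (i : ℕ)) (1 : F)) := by
  rw [homogeneousSubmodule_eq_finsupp_supported, AddMonoidAlgebra.supported_eq_span_single]
  congr 1
  ext f
  constructor
  · rintro ⟨d, hd, rfl⟩
    have hd' : d.degree = n := hd
    have h0 : d 0 ≤ n := by rw [degree_fin2] at hd'; omega
    exact ⟨⟨d 0, by omega⟩, by
      show monomial (expo n (d 0)) (1 : F) = AddMonoidAlgebra.single d 1
      rw [single_eq_monomial, ← eq_expo hd']⟩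
  · rintro ⟨i, rfl⟩
    exact ⟨expo n (i : ℕ), expo_degree (by omega : (i:ℕ) ≤ n),
      (single_eq_monomial _ _)⟩

section BasisSection
variable (F : Type*) [Field F] (n : ℕ)

/-- The `i`-th basic monomial of `V_n`. -/
noncomputable def monoV (i : Fin (n+1)) : homogeneousSubmodule (Fin 2) F n :=
  ⟨monomial (expo n (i : ℕ)) 1, mem_expo (by omega)⟩

lemma monoV_li : LinearIndependent F (monoV F n) := by
  have h : LinearIndependent F
      (fun i : Fin (n+1) => monomial (expo n (i : ℕ)) (1 : F)) := by
    have := (MvPolynomial.basisMonomials (Fin 2) F).linearIndependent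
    have h2 := this.comp _ (expo_injective n)
    exact h2
  exact h.of_comp (homogeneousSubmodule (Fin 2) F n).subtype

lemma monoV_span : ⊤ ≤ Submodule.span F (Set.range (monoV F n)) := by
  intro x _
  have hmap : Submodule.map (homogeneousSubmodule (Fin 2) F n).subtype
      (Submodule.span F (Set.range (monoV F n))) = homogeneousSubmodule (Fin 2) F n := by
    rw [Submodule.map_span]
    have himg : (⇑(homogeneousSubmodule (Fin 2) F n).subtype '' Set.range (monoV F n)) =
        Set.range fun i : Fin (n+1) => monomial (expo n (i : ℕ)) (1 : F) := by
      ext f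
      simp only [Set.mem_image, Set.mem_range]
      constructor
      · rintro ⟨y, ⟨i, rfl⟩, rfl⟩; exact ⟨i, rfl⟩
      · rintro ⟨i, rfl⟩; exact ⟨monoV F n i, ⟨i, rfl⟩, rfl⟩
    rw [himg]
    exact (homogeneous_span F n).symm
  have hx : (x : MvPolynomial (Fin 2) F) ∈ Submodule.map
      (homogeneousSubmodule (Fin 2) F n).subtype
      (Submodule.span F (Set.range (monoV F n))) := by
    rw [hmap]; exact x.2
  obtain ⟨y, hy, hyx⟩ := hx
  have : y = x := Subtype.ext hyx
  rwa [this] at hy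

/-- Basis of monomials for the space of homogeneous polynomials of degree `n`. -/
noncomputable def Vbasis : Module.Basis (Fin (n+1)) F (homogeneousSubmodule (Fin 2) F n) :=
  Module.Basis.mk (monoV_li F n) (monoV_span F n)

lemma Vbasis_apply (i : Fin (n+1)) : Vbasis F n i = monoV F n i :=
  Module.Basis.mk_apply _ _ i

instance : FiniteDimensional F (homogeneousSubmodule (Fin 2) F n) :=
  Module.Finite.of_basis (Vbasis F n)

lemma finrank_V : Module.finrank F (homogeneousSubmodule (Fin 2) F n) = n + 1 := by
  rw [Module.finrank_eq_card_basis (Vbasis F n), Fintype.card_fin]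

end BasisSection

section FrSection
variable (p : ℕ) [Fact p.Prime]

/-- The Frobenius twist `X ↦ X^p`, `Y ↦ Y^p`. -/
noncomputable def Fr : MvPolynomial (Fin 2) (ZMod p) →ₐ[ZMod p] MvPolynomial (Fin 2) (ZMod p) :=
  aeval (fun i => X i ^ p)

lemma Fr_X (i : Fin 2) : Fr p (X i) = X i ^ p := aeval_X _ i

lemma Fr_monomial_expo {n i : ℕ} (h : i ≤ n) :
    Fr p (monomial (expo n i) 1) = monomial (expo (p * n) (p * i)) 1 := by
  rw [monomial_expo, monomial_expo, map_mul, map_pow, map_pow, Fr_X, Fr_X,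
    ← pow_mul, ← pow_mul]
  have : p * n - p * i = p * (n - i) := by
    have h2 := Nat.left_distrib p (n - i) i
    have h3 : n - i + i = n := by omega
    rw [h3] at h2
    omega
  rw [this, mul_comm p i, mul_comm p (n - i)]

lemma Fr_mem {n : ℕ} {f : MvPolynomial (Fin 2) (ZMod p)}
    (hf : f ∈ homogeneousSubmodule (Fin 2) (ZMod p) n) :
    Fr p f ∈ homogeneousSubmodule (Fin 2) (ZMod p) (p * n) := by
  rw [homogeneous_span] at hf
  induction hf using Submodule.span_induction with
  | mem x hx =>
    obtain ⟨i, rfl⟩ := hx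
    rw [Fr_monomial_expo p (by omega : (i:ℕ) ≤ n)]
    exact mem_expo (Nat.mul_le_mul_left p (by omega : (i:ℕ) ≤ n))
  | zero => simp
  | add x y _ _ hx hy => rw [map_add]; exact add_mem hx hy
  | smul c x _ hx => rw [map_smul]; exact Submodule.smul_mem _ c hx

lemma matAct_Fr_comm (g : Matrix (Fin 2) (Fin 2) (ZMod p))
    (f : MvPolynomial (Fin 2) (ZMod p)) :
    matAct g (Fr p f) = Fr p (matAct g f) := by
  have : (matAct g).comp (Fr p) = (Fr p).comp (matAct g) := by
    apply MvPolynomial.algHom_ext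
    intro i
    simp only [AlgHom.comp_apply, Fr, matAct, aeval_X, map_pow, map_sum, map_mul, aeval_C,
      algebraMap_eq]
    rw [sum_pow_char]
    congr 1
    ext j
    rw [mul_pow, ← map_pow, ZMod.pow_card]
  exact congrFun (congrArg (fun h => h.toFun) this) f

lemma key {i j : ℕ} (hi : i ≤ 1) (hj : j ≤ p - 1) :
    Fr p (monomial (expo 1 i) 1) * monomial (expo (p-1) j) 1 =
      monomial (expo (2*p-1) (p*i + j)) (1 : ZMod p) := by
  have hp1 : 1 ≤ p := (Fact.out : p.Prime).pos
  rw [Fr_monomial_expo p hi, monomial_mul, one_mul]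
  have he : expo (p*1) (p*i) + expo (p-1) j = expo (2*p-1) (p*i+j) := by
    ext a
    fin_cases a
    · show (expo (p*1) (p*i) + expo (p-1) j) 0 = expo (2*p-1) (p*i+j) 0
      rw [Finsupp.add_apply, expo_apply0, expo_apply0, expo_apply0]
    · show (expo (p*1) (p*i) + expo (p-1) j) 1 = expo (2*p-1) (p*i+j) 1
      rw [Finsupp.add_apply, expo_apply1, expo_apply1, expo_apply1]
      interval_cases i <;> omega
  rw [he]

lemma memMul {a b : MvPolynomial (Fin 2) (ZMod p)}
    (ha : a ∈ homogeneousSubmodule (Fin 2) (ZMod p) 1)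
    (hb : b ∈ homogeneousSubmodule (Fin 2) (ZMod p) (p - 1)) :
    Fr p a * b ∈ homogeneousSubmodule (Fin 2) (ZMod p) (2 * p - 1) := by
  have hp1 : 1 ≤ p := (Fact.out : p.Prime).pos
  have h1 := Fr_mem p ha
  have h2 : (Fr p a).IsHomogeneous (p * 1) := h1
  have h3 : (Fr p a * b).IsHomogeneous (p * 1 + (p - 1)) := h2.mul hb
  have h4 : p * 1 + (p - 1) = 2 * p - 1 := by omega
  rw [mem_homogeneousSubmodule, ← h4]
  exact h3

/-- The Steinberg bilinear map `(a, b) ↦ Fr(a) * b`. -/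
noncomputable def B :
    homogeneousSubmodule (Fin 2) (ZMod p) 1 →ₗ[ZMod p]
      homogeneousSubmodule (Fin 2) (ZMod p) (p - 1) →ₗ[ZMod p]
      homogeneousSubmodule (Fin 2) (ZMod p) (2 * p - 1) :=
  LinearMap.mk₂ (ZMod p) (fun a b => ⟨Fr p a.1 * b.1, memMul p a.2 b.2⟩)
    (fun a a' b => Subtype.ext <| by simp [add_mul])
    (fun c a b => Subtype.ext <| by simp [smul_mul_assoc])
    (fun a b b' => Subtype.ext <| by simp [mul_add])
    (fun c a b => Subtype.ext <| by simp [mul_smul_comm])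

/-- The Steinberg linear map `V_1 ⊗ V_{p-1} → V_{2p-1}`. -/
noncomputable def Phi0 :
    (homogeneousSubmodule (Fin 2) (ZMod p) 1 ⊗[ZMod p]
      homogeneousSubmodule (Fin 2) (ZMod p) (p - 1)) →ₗ[ZMod p]
      homogeneousSubmodule (Fin 2) (ZMod p) (2 * p - 1) :=
  TensorProduct.lift (B p)

lemma Phi0_tmul (a : homogeneousSubmodule (Fin 2) (ZMod p) 1)
    (b : homogeneousSubmodule (Fin 2) (ZMod p) (p - 1)) :
    (Phi0 p (a ⊗ₜ b) : MvPolynomial (Fin 2) (ZMod p)) = Fr p a.1 * b.1 := rfl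

lemma Phi0_surj : Function.Surjective (Phi0 p) := by
  have hp1 : 1 ≤ p := (Fact.out : p.Prime).pos
  rw [← LinearMap.range_eq_top, eq_top_iff, ← (Vbasis (ZMod p) (2*p-1)).span_eq,
    Submodule.span_le]
  rintro _ ⟨a, rfl⟩
  rw [Vbasis_apply]
  have ha : (a : ℕ) < 2*p-1+1 := a.2
  rcases Nat.lt_or_ge (a : ℕ) p with h | h
  · refine ⟨(monoV (ZMod p) 1 ⟨0, by omega⟩) ⊗ₜ (monoV (ZMod p) (p-1) ⟨(a:ℕ), by omega⟩), ?_⟩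
    apply Subtype.ext
    rw [Phi0_tmul]
    show Fr p (monomial (expo 1 0) 1) * monomial (expo (p-1) (a:ℕ)) 1 = _
    rw [key p (by omega) (by omega)]
    show _ = monomial (expo (2*p-1) (a:ℕ)) (1 : ZMod p)
    rw [Nat.mul_zero, Nat.zero_add]
  · refine ⟨(monoV (ZMod p) 1 ⟨1, by omega⟩) ⊗ₜ (monoV (ZMod p) (p-1) ⟨(a:ℕ) - p, by omega⟩), ?_⟩
    apply Subtype.ext
    rw [Phi0_tmul]
    show Fr p (monomial (expo 1 1) 1) * monomial (expo (p-1) ((a:ℕ) - p)) 1 = _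
    rw [key p (by omega) (by omega)]
    show _ = monomial (expo (2*p-1) (a:ℕ)) (1 : ZMod p)
    have : p * 1 + ((a:ℕ) - p) = (a:ℕ) := by omega
    rw [this]

lemma Phi0_inj : Function.Injective (Phi0 p) := by
  have hp1 : 1 ≤ p := (Fact.out : p.Prime).pos
  have hfr : Module.finrank (ZMod p)
      (homogeneousSubmodule (Fin 2) (ZMod p) 1 ⊗[ZMod p]
        homogeneousSubmodule (Fin 2) (ZMod p) (p - 1)) =
      Module.finrank (ZMod p) (homogeneousSubmodule (Fin 2) (ZMod p) (2 * p - 1)) := by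
    rw [Module.finrank_tensorProduct, finrank_V, finrank_V, finrank_V]
    omega
  exact (LinearMap.injective_iff_surjective_of_finrank_eq_finrank hfr).mpr (Phi0_surj p)

end FrSection

/-- For `p` prime there is an isomorphism of `F_p[SL₂(F_p)]`-modules
`V_1 ⊗ V_{p-1} ≅ V_{2p-1}` (Steinberg tensor product decomposition restricted
to `SL₂(F_p)`). -/
theorem V2pm1_iso_V1_tensor_Vpm1 (p : ℕ) [Fact p.Prime]
    (hact : ∀ (g : Matrix.SpecialLinearGroup (Fin 2) (ZMod p)) (m : ℕ),
      ∀ f ∈ homogeneousSubmodule (Fin 2) (ZMod p) m,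
        matAct (↑g : Matrix (Fin 2) (Fin 2) (ZMod p)) f ∈
          homogeneousSubmodule (Fin 2) (ZMod p) m) :
    ∃ Φ : (↥(homogeneousSubmodule (Fin 2) (ZMod p) 1) ⊗[ZMod p]
            ↥(homogeneousSubmodule (Fin 2) (ZMod p) (p - 1))) ≃ₗ[ZMod p]
          ↥(homogeneousSubmodule (Fin 2) (ZMod p) (2 * p - 1)),
      ∀ (g : Matrix.SpecialLinearGroup (Fin 2) (ZMod p))
        (a : ↥(homogeneousSubmodule (Fin 2) (ZMod p) 1))
        (b : ↥(homogeneousSubmodule (Fin 2) (ZMod p) (p - 1))),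
        (Φ ((⟨matAct (↑g : Matrix (Fin 2) (Fin 2) (ZMod p)) a.1, hact g 1 a.1 a.2⟩ :
              ↥(homogeneousSubmodule (Fin 2) (ZMod p) 1)) ⊗ₜ
            (⟨matAct (↑g : Matrix (Fin 2) (Fin 2) (ZMod p)) b.1, hact g (p - 1) b.1 b.2⟩ :
              ↥(homogeneousSubmodule (Fin 2) (ZMod p) (p - 1)))) : MvPolynomial (Fin 2) (ZMod p)) =
          matAct (↑g : Matrix (Fin 2) (Fin 2) (ZMod p)) (Φ (a ⊗ₜ b) : MvPolynomial (Fin 2) (ZMod p)) := by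
  refine ⟨LinearEquiv.ofBijective (Phi0 p) ⟨Phi0_inj p, Phi0_surj p⟩, ?_⟩
  intro g a b
  erw [LinearEquiv.ofBijective_apply, LinearEquiv.ofBijective_apply, Phi0_tmul, Phi0_tmul]
  show Fr p (matAct (↑g) a.1) * matAct (↑g) b.1 = matAct (↑g) (Fr p a.1 * b.1)
  rw [map_mul, matAct_Fr_comm]
end

section
/- For p an odd prime and 2 ≤ k ≤ p−1, the exact sequence of F_q[SL_2(F_q)]-modules 0 → V_{k-2} → V_{k+(q-1)}/D(V_k) → coker → 0, with first map induced by multiplication by θ_q, does not split. -/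
open MvPolynomial

namespace NonsplitAux

variable {F : Type*} [CommRing F]

/-- Exponent finsupp for the monomial `X^a Y^b`. -/
noncomputable def mm (a b : ℕ) : Fin 2 →₀ ℕ := Finsupp.single 0 a + Finsupp.single 1 b

@[simp] lemma mm_apply0 (a b : ℕ) : mm a b 0 = a := by simp [mm, Finsupp.single_apply]
@[simp] lemma mm_apply1 (a b : ℕ) : mm a b 1 = b := by simp [mm, Finsupp.single_apply]

lemma fin2_eta (d : Fin 2 →₀ ℕ) : mm (d 0) (d 1) = d := by
  ext i; fin_cases i <;> simp

lemma mm_eq_iff {a b c d : ℕ} : mm a b = mm c d ↔ a = c ∧ b = d := by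
  constructor
  · intro h
    exact ⟨by simpa using DFunLike.congr_fun h 0, by simpa using DFunLike.congr_fun h 1⟩
  · rintro ⟨rfl, rfl⟩; rfl

lemma mm_le_iff {a b c d : ℕ} : mm a b ≤ mm c d ↔ a ≤ c ∧ b ≤ d := by
  constructor
  · intro h
    exact ⟨by simpa using h 0, by simpa using h 1⟩
  · intro ⟨h1, h2⟩ i
    fin_cases i <;> simpa

lemma mm_sub (a b c d : ℕ) : mm a b - mm c d = mm (a - c) (b - d) := by
  ext i; fin_cases i <;> simp [Finsupp.tsub_apply]

lemma mm_add (a b c d : ℕ) : mm a b + mm c d = mm (a + c) (b + d) := by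
  ext i; fin_cases i <;> simp

lemma mm_degree (a b : ℕ) : (mm a b).degree = a + b := by
  rw [Finsupp.degree_eq_weight_one]
  simp [Finsupp.weight_apply, Finsupp.sum_fintype, Fin.sum_univ_two]

lemma X_pow_mul_X_pow (a b : ℕ) :
    (X 0 ^ a * X 1 ^ b : MvPolynomial (Fin 2) F) = monomial (mm a b) 1 := by
  rw [X_pow_eq_monomial, X_pow_eq_monomial, monomial_mul, mm, mul_one]

lemma coeff_pderiv (i : Fin 2) (m : Fin 2 →₀ ℕ) (f : MvPolynomial (Fin 2) F) :
    coeff m (pderiv i f) = (m i + 1) * coeff (m + Finsupp.single i 1) f := by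
  induction f using MvPolynomial.induction_on' with
  | add p q hp hq => simp [map_add, hp, hq, mul_add]
  | monomial s a =>
    rw [pderiv_monomial, coeff_monomial, coeff_monomial]
    by_cases hs : s = m + Finsupp.single i 1
    · subst hs
      have h1 : m + Finsupp.single i 1 - Finsupp.single i 1 = m := by
        ext j
        simp only [Finsupp.tsub_apply, Finsupp.add_apply, Finsupp.single_apply]
        omega
      have h2 : (m + Finsupp.single i 1 : Fin 2 →₀ ℕ) i = m i + 1 := by
        rw [Finsupp.add_apply, Finsupp.single_eq_same]
      rw [if_pos h1, if_pos rfl, h2]; push_cast; ring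
    · rw [if_neg hs]
      by_cases hz : s i = 0
      · have h1 : s - Finsupp.single i 1 = s := by
          ext j
          simp only [Finsupp.tsub_apply, Finsupp.single_apply]
          by_cases hj : i = j
          · subst hj; omega
          · simp [hj]
        rw [h1]
        by_cases hsm : s = m
        · subst hsm; simp [hz]
        · simp [hsm]
      · have h1 : s - Finsupp.single i 1 ≠ m := by
          intro h
          apply hs
          rw [← h]
          ext j
          simp only [Finsupp.add_apply, Finsupp.tsub_apply, Finsupp.single_apply]
          by_cases hj : i = j
          · subst hj; rw [if_pos rfl]; omega
          · simp [hj]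
        simp [h1]

lemma mm_single0 (a : ℕ) : Finsupp.single (0 : Fin 2) a = mm a 0 := by
  simp [mm]

lemma mm_single1 (a : ℕ) : Finsupp.single (1 : Fin 2) a = mm 0 a := by
  simp [mm]

lemma monomial_mm {F : Type*} [CommRing F] (a b : ℕ) (c : F) :
    monomial (mm a b) c = C c * (X 0 ^ a * X 1 ^ b) := by
  rw [X_pow_mul_X_pow, C_mul_monomial, mul_one]

lemma serreD_apply {F : Type*} [CommRing F] (q : ℕ) (f : MvPolynomial (Fin 2) F) :
    serreDLin F q f = X 0 ^ q * pderiv 0 f + X 1 ^ q * pderiv 1 f := by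
  simp [serreDLin, LinearMap.mulLeft_apply]

section Sums
open Finset
variable {F : Type*} [Field F] [Fintype F]

lemma sum_pow_card_sub_one (h3 : 3 ≤ Fintype.card F) :
    ∑ t : F, t ^ (Fintype.card F - 1) = -1 := by
  classical
  have h0 : (0 : F) ^ (Fintype.card F - 1) = 0 := zero_pow (by omega)
  rw [← Finset.add_sum_erase _ _ (Finset.mem_univ (0 : F)), h0, zero_add]
  have : ∀ t ∈ Finset.univ.erase (0 : F), t ^ (Fintype.card F - 1) = 1 := by
    intro t ht
    exact FiniteField.pow_card_sub_one_eq_one t (Finset.ne_of_mem_erase ht)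
  rw [Finset.sum_congr rfl this, Finset.sum_const, Finset.card_erase_of_mem (Finset.mem_univ _),
    Finset.card_univ, nsmul_eq_mul, mul_one]
  have : ((Fintype.card F - 1 : ℕ) : F) = (Fintype.card F : F) - 1 := by
    push_cast [Nat.cast_sub (by omega : 1 ≤ Fintype.card F)]; ring
  rw [this, FiniteField.cast_card_eq_zero F, zero_sub]

lemma sum_pow_ne (h3 : 3 ≤ Fintype.card F) (i : ℕ) (h1 : 1 ≤ i) (h2 : i ≤ Fintype.card F)
    (hne : i ≠ Fintype.card F - 1) : ∑ t : F, t ^ i = 0 := by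
  rcases lt_or_ge i (Fintype.card F - 1) with hlt | hge
  · exact FiniteField.sum_pow_lt_card_sub_one F i hlt
  · have hi : i = Fintype.card F := by omega
    subst hi
    calc ∑ t : F, t ^ Fintype.card F = ∑ t : F, t ^ 1 := by
          refine Finset.sum_congr rfl fun t _ => ?_
          rw [pow_one, FiniteField.pow_card]
      _ = 0 := FiniteField.sum_pow_lt_card_sub_one F 1 (by omega)

lemma core_sum (a b : ℕ) :
    ∑ t : F, t • (X 0 ^ a * (C t * X 0 + X 1) ^ b : MvPolynomial (Fin 2) F)
      = ∑ j ∈ Finset.range (b + 1),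
          (∑ t : F, t ^ (j + 1)) • ((b.choose j : MvPolynomial (Fin 2) F)
            * (X 0 ^ (a + j) * X 1 ^ (b - j))) := by
  have step : ∀ t : F, t • (X 0 ^ a * (C t * X 0 + X 1) ^ b : MvPolynomial (Fin 2) F)
      = ∑ j ∈ Finset.range (b + 1), t ^ (j + 1) • ((b.choose j : MvPolynomial (Fin 2) F)
          * (X 0 ^ (a + j) * X 1 ^ (b - j))) := by
    intro t
    rw [add_pow, Finset.mul_sum, Finset.smul_sum]
    refine Finset.sum_congr rfl fun j hj => ?_
    rw [smul_eq_C_mul, smul_eq_C_mul, C_pow, pow_add]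
    ring
  simp_rw [step]
  rw [Finset.sum_comm]
  exact Finset.sum_congr rfl fun j _ => (Finset.sum_smul).symm

lemma sum_small (a b : ℕ) (hb : b + 1 < Fintype.card F - 1) :
    ∑ t : F, t • (X 0 ^ a * (C t * X 0 + X 1) ^ b : MvPolynomial (Fin 2) F) = 0 := by
  rw [core_sum]
  refine Finset.sum_eq_zero fun j hj => ?_
  rw [Finset.mem_range] at hj
  rw [FiniteField.sum_pow_lt_card_sub_one F _ (by omega), zero_smul]

lemma sum_big (a : ℕ) (h3 : 3 ≤ Fintype.card F) :
    ∑ t : F, t • (X 0 ^ a * (C t * X 0 + X 1) ^ (Fintype.card F - 1) : MvPolynomial (Fin 2) F)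
      = X 0 ^ (a + Fintype.card F - 2) * X 1 := by
  rw [core_sum]
  rw [Finset.sum_eq_single (Fintype.card F - 2)]
  · rw [show Fintype.card F - 2 + 1 = Fintype.card F - 1 by omega, sum_pow_card_sub_one h3]
    have hch : (Fintype.card F - 1).choose (Fintype.card F - 2) = Fintype.card F - 1 := by
      rw [show Fintype.card F - 1 = Fintype.card F - 2 + 1 by omega]
      exact Nat.choose_succ_self_right _
    have hcast : (((Fintype.card F - 1).choose (Fintype.card F - 2) : ℕ)
        : MvPolynomial (Fin 2) F) = -1 := by
      rw [hch]
      have : ((Fintype.card F - 1 : ℕ) : MvPolynomial (Fin 2) F)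
          = C ((Fintype.card F - 1 : ℕ) : F) := by
        rw [MvPolynomial.C_eq_coe_nat]
      rw [this, Nat.cast_sub (by omega : 1 ≤ Fintype.card F), FiniteField.cast_card_eq_zero F,
        zero_sub, Nat.cast_one, map_neg, map_one]
    rw [hcast]
    rw [show Fintype.card F - 1 - (Fintype.card F - 2) = 1 by omega, pow_one]
    rw [show a + (Fintype.card F - 2) = a + Fintype.card F - 2 by omega]
    simp
  · intro j hj hne
    rw [Finset.mem_range] at hj
    rw [sum_pow_ne h3 (j + 1) (by omega) (by omega) (by omega), zero_smul]
  · intro hmem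
    exact absurd (Finset.mem_range.mpr (by omega)) hmem

end Sums

end NonsplitAux

open NonsplitAux

/-- For `p` an odd prime and `2 ≤ k ≤ p − 1`, the exact sequence of
`F_q[SL₂(F_q)]`-modules `0 → V_{k-2} → V_{k+(q-1)}/D(V_k) → coker → 0` (first map
induced by multiplication by `θ_q`) does not split: there is no `SL₂(F_q)`-stable
submodule `M` with `D(V_k) ≤ M ≤ V_{k+(q-1)}` such that `M/D(V_k)` is a
complement of the image of `θ_q·V_{k-2}` in `V_{k+(q-1)}/D(V_k)`. -/
theorem quotient_sequence_nonsplit (F : Type*) [Field F] [Fintype F]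
    (p n : ℕ) (hp : p.Prime) (hodd : Odd p) [CharP F p]
    (hq : Fintype.card F = p ^ n) (hn : 0 < n)
    (k : ℕ) (hk2 : 2 ≤ k) (hkp : k ≤ p - 1) :
    ¬ ∃ M : Submodule F (MvPolynomial (Fin 2) F),
      Submodule.map (serreDLin F (Fintype.card F))
          (homogeneousSubmodule (Fin 2) F k) ≤ M ∧
      M ≤ homogeneousSubmodule (Fin 2) F (k + Fintype.card F - 1) ∧
      (∀ g : Matrix.SpecialLinearGroup (Fin 2) F, ∀ f ∈ M,
        matAct (↑g : Matrix (Fin 2) (Fin 2) F) f ∈ M) ∧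
      M ⊓ (Submodule.map (serreDLin F (Fintype.card F))
              (homogeneousSubmodule (Fin 2) F k) ⊔
            Submodule.map
              (LinearMap.mulLeft F (X 0 ^ Fintype.card F * X 1 - X 0 * X 1 ^ Fintype.card F))
              (homogeneousSubmodule (Fin 2) F (k - 2))) =
        Submodule.map (serreDLin F (Fintype.card F))
          (homogeneousSubmodule (Fin 2) F k) ∧
      M ⊔ Submodule.map
            (LinearMap.mulLeft F (X 0 ^ Fintype.card F * X 1 - X 0 * X 1 ^ Fintype.card F))
            (homogeneousSubmodule (Fin 2) F (k - 2)) =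
        homogeneousSubmodule (Fin 2) F (k + Fintype.card F - 1) := by
  rintro ⟨M, hDM, hMV, hstab, hinf, hsup⟩
  classical
  haveI := Fact.mk hp
  set q := Fintype.card F with hqdef
  have hp3 : 3 ≤ p := by
    have h2 := hp.two_le
    obtain ⟨m, rfl⟩ := hodd
    omega
  have hq3 : 3 ≤ q := by
    rw [hq]
    calc 3 ≤ p := hp3
      _ ≤ p ^ n := Nat.le_self_pow (by omega) p
  have hkq : k < q := by
    have : p ≤ q := by
      rw [hq]; exact Nat.le_self_pow (by omega) p
    omega
  -- the unipotent element
  have hdet : ∀ t : F, Matrix.det !![1, t; 0, 1] = 1 := by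
    intro t; rw [Matrix.det_fin_two_of]; ring
  have hact0 : ∀ t : F, matAct !![1, t; 0, 1] (X 0 : MvPolynomial (Fin 2) F) = X 0 := by
    intro t
    simp [matAct, Fin.sum_univ_two]
  have hact1 : ∀ t : F, matAct !![1, t; 0, 1] (X 1 : MvPolynomial (Fin 2) F)
      = C t * X 0 + X 1 := by
    intro t
    simp [matAct, Fin.sum_univ_two]
  -- Frobenius
  have hfrob : ∀ t : F, (C t * X 0 + X 1 : MvPolynomial (Fin 2) F) ^ q
      = C t * X 0 ^ q + X 1 ^ q := by
    intro t
    have hpc : t ^ q = t := by rw [hqdef]; exact FiniteField.pow_card t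
    rw [hq, add_pow_char_pow, mul_pow, ← C_pow, ← hq, hpc]
  -- θ is invariant
  have hactθ : ∀ t : F, matAct !![1, t; 0, 1]
      (X 0 ^ q * X 1 - X 0 * X 1 ^ q : MvPolynomial (Fin 2) F)
      = X 0 ^ q * X 1 - X 0 * X 1 ^ q := by
    intro t
    rw [map_sub, map_mul, map_mul, map_pow, map_pow, hact0, hact1, hfrob]
    ring
  -- Step 1: split the monomial X^k Y^(q-1) along M ⊔ θ·V_(k-2)
  have hXk : (X 0 ^ k * X 1 ^ (q - 1) : MvPolynomial (Fin 2) F)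
      ∈ homogeneousSubmodule (Fin 2) F (k + q - 1) := by
    rw [mem_homogeneousSubmodule, X_pow_mul_X_pow]
    exact isHomogeneous_monomial _ (by rw [mm_degree]; omega)
  rw [← hsup] at hXk
  obtain ⟨m, hmM, u, huθ, hmu⟩ := Submodule.mem_sup.mp hXk
  obtain ⟨h, hh, rfl⟩ := huθ
  rw [LinearMap.mulLeft_apply] at hmu
  have hm : m = X 0 ^ k * X 1 ^ (q - 1)
      - (X 0 ^ q * X 1 - X 0 * X 1 ^ q) * h := by
    rw [← hmu]; ring
  -- Step 2: the averaged element w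
  set w : MvPolynomial (Fin 2) F := ∑ t : F, t • matAct !![1, t; 0, 1] m with hwdef
  have hwM : w ∈ M := by
    refine Submodule.sum_mem _ fun t _ => Submodule.smul_mem _ _ ?_
    exact hstab ⟨!![1, t; 0, 1], hdet t⟩ m hmM
  -- Step 3: compute w
  have hactC : ∀ (t : F) (c : F), matAct !![1, t; 0, 1] (C c : MvPolynomial (Fin 2) F) = C c := by
    intro t c
    simp [matAct, aeval_C, algebraMap_eq]
  have hsupp : ∀ μ ∈ h.support, (μ 0) + (μ 1) = k - 2 := by
    intro μ hμ
    have hdeg : Finsupp.degree μ = k - 2 := by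
      rw [Finsupp.degree_eq_weight_one]
      exact ((mem_homogeneousSubmodule _ _).mp hh) (mem_support_iff.mp hμ)
    rw [← fin2_eta μ, mm_degree] at hdeg
    exact hdeg
  have hB : ∑ t : F, t • matAct !![1, t; 0, 1] h = 0 := by
    calc ∑ t : F, t • matAct !![1, t; 0, 1] h
        = ∑ t : F, ∑ μ ∈ h.support,
            t • (C (coeff μ h) * (X 0 ^ (μ 0) * (C t * X 0 + X 1) ^ (μ 1))) := by
          refine Finset.sum_congr rfl fun t _ => ?_
          conv_lhs => rw [h.as_sum]
          rw [map_sum, Finset.smul_sum]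
          refine Finset.sum_congr rfl fun μ hμ => ?_
          congr 1
          conv_lhs => rw [← fin2_eta μ]
          rw [monomial_mm, map_mul, map_mul, map_pow, map_pow, hact0, hact1, hactC, fin2_eta]
      _ = ∑ μ ∈ h.support, C (coeff μ h)
            * ∑ t : F, t • (X 0 ^ (μ 0) * (C t * X 0 + X 1) ^ (μ 1)) := by
          rw [Finset.sum_comm]
          refine Finset.sum_congr rfl fun μ _ => ?_
          rw [Finset.mul_sum]
          exact Finset.sum_congr rfl fun t _ => (mul_smul_comm _ _ _).symm
      _ = 0 := by
          refine Finset.sum_eq_zero fun μ hμ => ?_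
          have h1 := hsupp μ hμ
          have hq' : q = Fintype.card F := hqdef
          rw [sum_small _ _ (by omega), mul_zero]
  have hw : w = X 0 ^ (k + q - 2) * X 1 := by
    have hterm : ∀ t : F, matAct !![1, t; 0, 1] m
        = X 0 ^ k * (C t * X 0 + X 1) ^ (q - 1)
          - (X 0 ^ q * X 1 - X 0 * X 1 ^ q) * matAct !![1, t; 0, 1] h := by
      intro t
      rw [hm, map_sub, map_mul, map_mul, map_pow, map_pow, hact0, hact1, hactθ]
    calc w = ∑ t : F, (t • (X 0 ^ k * (C t * X 0 + X 1) ^ (q - 1))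
          - (X 0 ^ q * X 1 - X 0 * X 1 ^ q) * (t • matAct !![1, t; 0, 1] h)) := by
          refine Finset.sum_congr rfl fun t _ => ?_
          rw [hterm t, smul_sub, mul_smul_comm]
      _ = (∑ t : F, t • (X 0 ^ k * (C t * X 0 + X 1) ^ (q - 1)))
          - (X 0 ^ q * X 1 - X 0 * X 1 ^ q)
            * ∑ t : F, t • matAct !![1, t; 0, 1] h := by
          rw [Finset.sum_sub_distrib, Finset.mul_sum]
      _ = X 0 ^ (k + q - 2) * X 1 := by
          rw [hB, mul_zero, sub_zero, hqdef, sum_big k (by rw [← hqdef]; exact hq3)]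
  -- Step 4: w lies in D(V_k) ⊔ θ·V_(k-2)
  have hksF : (k : F) ≠ 0 := by
    have : ¬ (p ∣ k) := by
      intro hdvd
      have := Nat.le_of_dvd (by omega) hdvd
      omega
    simpa [CharP.cast_eq_zero_iff F p k] using this
  have e1 : pderiv 0 (X 0 ^ (k - 1) * X 1 ^ 1 : MvPolynomial (Fin 2) F)
      = monomial (mm (k - 2) 1) ((k : F) - 1) := by
    rw [X_pow_mul_X_pow, pderiv_monomial, mm_single0, mm_sub]
    rw [show k - 1 - 1 = k - 2 by omega, show 1 - 0 = 1 by omega]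
    congr 1
    rw [mm_apply0, one_mul, Nat.cast_sub (by omega : 1 ≤ k), Nat.cast_one]
  have e2 : pderiv 1 (X 0 ^ (k - 1) * X 1 ^ 1 : MvPolynomial (Fin 2) F)
      = monomial (mm (k - 1) 0) 1 := by
    rw [X_pow_mul_X_pow, pderiv_monomial, mm_single1, mm_sub]
    rw [show k - 1 - 0 = k - 1 by omega, show 1 - 1 = 0 by omega]
    congr 1
    rw [mm_apply1, one_mul, Nat.cast_one]
  have hD1 : serreDLin F q (X 0 ^ (k - 1) * X 1 ^ 1)
      = monomial (mm (k + q - 2) 1) ((k : F) - 1) + monomial (mm (k - 1) q) 1 := by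
    rw [serreD_apply, e1, e2, X_pow_eq_monomial, X_pow_eq_monomial, mm_single0, mm_single1,
      monomial_mul, monomial_mul, mm_add, mm_add]
    simp only [zero_add, add_zero, one_mul, mul_one]
    rw [show q + (k - 2) = k + q - 2 by omega]
  have e3 : (X 0 ^ q * X 1 - X 0 * X 1 ^ q) * X 0 ^ (k - 2)
      = monomial (mm (k + q - 2) 1) (1 : F) - monomial (mm (k - 1) q) 1 := by
    have a1 : (X 0 ^ q * X 1 : MvPolynomial (Fin 2) F) * X 0 ^ (k - 2)
        = X 0 ^ (k + q - 2) * X 1 ^ 1 := by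
      rw [show k + q - 2 = q + (k - 2) by omega, pow_add]; ring
    have a2 : (X 0 * X 1 ^ q : MvPolynomial (Fin 2) F) * X 0 ^ (k - 2)
        = X 0 ^ (k - 1) * X 1 ^ q := by
      rw [show k - 1 = 1 + (k - 2) by omega, pow_add]; ring
    rw [sub_mul, a1, a2, X_pow_mul_X_pow, X_pow_mul_X_pow]
  have hX0k2 : (X 0 ^ (k - 2) : MvPolynomial (Fin 2) F)
      ∈ homogeneousSubmodule (Fin 2) F (k - 2) := by
    rw [mem_homogeneousSubmodule, X_pow_eq_monomial, mm_single0]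
    exact isHomogeneous_monomial _ (by rw [mm_degree]; omega)
  have hfd : (X 0 ^ (k - 1) * X 1 ^ 1 : MvPolynomial (Fin 2) F)
      ∈ homogeneousSubmodule (Fin 2) F k := by
    rw [mem_homogeneousSubmodule, X_pow_mul_X_pow]
    exact isHomogeneous_monomial _ (by rw [mm_degree]; omega)
  have key : serreDLin F q ((k : F)⁻¹ • (X 0 ^ (k - 1) * X 1 ^ 1))
      + (X 0 ^ q * X 1 - X 0 * X 1 ^ q) * ((k : F)⁻¹ • X 0 ^ (k - 2)) = w := by
    rw [map_smul, hD1, mul_smul_comm, e3, ← smul_add]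
    have comb : (monomial (mm (k + q - 2) 1) ((k : F) - 1) + monomial (mm (k - 1) q) 1)
        + (monomial (mm (k + q - 2) 1) (1 : F) - monomial (mm (k - 1) q) 1)
        = monomial (mm (k + q - 2) 1) (k : F) := by
      rw [show (k : F) = ((k : F) - 1) + 1 by ring, map_add]
      ring
    rw [comb, smul_monomial, smul_eq_mul, inv_mul_cancel₀ hksF, hw,
      show (X 1 : MvPolynomial (Fin 2) F) = X 1 ^ 1 from (pow_one _).symm, X_pow_mul_X_pow]
  have hwsup : w ∈ Submodule.map (serreDLin F q) (homogeneousSubmodule (Fin 2) F k) ⊔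
      Submodule.map (LinearMap.mulLeft F (X 0 ^ q * X 1 - X 0 * X 1 ^ q))
        (homogeneousSubmodule (Fin 2) F (k - 2)) := by
    apply Submodule.mem_sup.mpr
    refine ⟨serreDLin F q ((k : F)⁻¹ • (X 0 ^ (k - 1) * X 1 ^ 1)),
      Submodule.mem_map_of_mem (Submodule.smul_mem _ _ hfd),
      (X 0 ^ q * X 1 - X 0 * X 1 ^ q) * ((k : F)⁻¹ • X 0 ^ (k - 2)), ?_, key⟩
    refine ⟨(k : F)⁻¹ • X 0 ^ (k - 2), Submodule.smul_mem _ _ hX0k2, ?_⟩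
    rw [LinearMap.mulLeft_apply]
  -- Step 5: so w ∈ D(V_k)
  have hwD : w ∈ Submodule.map (serreDLin F q) (homogeneousSubmodule (Fin 2) F k) := by
    rw [← hinf]
    exact Submodule.mem_inf.mpr ⟨hwM, hwsup⟩
  obtain ⟨f, hf, hDf⟩ := hwD
  -- Step 6: coefficient contradiction
  have hDf' : X 0 ^ q * pderiv 0 f + X 1 ^ q * pderiv 1 f
      = monomial (mm (k + q - 2) 1) (1 : F) := by
    rw [← serreD_apply, hDf, hw,
      show (X 1 : MvPolynomial (Fin 2) F) = X 1 ^ 1 from (pow_one _).symm, X_pow_mul_X_pow]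
  -- first coefficient: at X^(k-1) Y^q
  have hc1 : coeff (mm (k - 1) 1) f = 0 := by
    have := congrArg (coeff (mm (k - 1) q)) hDf'
    rw [coeff_add, X_pow_eq_monomial, X_pow_eq_monomial, mm_single0, mm_single1,
      coeff_monomial_mul', coeff_monomial_mul',
      if_neg (by rw [mm_le_iff]; omega),
      if_pos (by rw [mm_le_iff]; omega), mm_sub,
      show k - 1 - 0 = k - 1 by omega, show q - q = 0 by omega,
      NonsplitAux.coeff_pderiv, mm_single1, mm_add, mm_apply1,
      coeff_monomial, if_neg (by rw [mm_eq_iff]; omega)] at this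
    simpa using this
  -- second coefficient: at X^(k+q-2) Y
  have hc2 : (1 : F) = 0 := by
    have := congrArg (coeff (mm (k + q - 2) 1)) hDf'
    rw [coeff_add, X_pow_eq_monomial, X_pow_eq_monomial, mm_single0, mm_single1,
      coeff_monomial_mul', coeff_monomial_mul',
      if_pos (by rw [mm_le_iff]; omega),
      if_neg (by rw [mm_le_iff]; omega), mm_sub,
      show k + q - 2 - q = k - 2 by omega, show 1 - 0 = 1 by omega,
      NonsplitAux.coeff_pderiv, mm_single0, mm_add, mm_apply0,
      show k - 2 + 1 = k - 1 by omega,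
      coeff_monomial, if_pos rfl, hc1] at this
    simpa using this
  exact one_ne_zero hc2
end
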